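/- Binomial approximation of 2X/3 is linearly bad (Proposition 4.6): Let X ~ Bin(3n, 1/2) and Y ~ Bin(2n, p) for some p ∈ [0,1]. Then there exists a constant C_p > 0, depending only on p, such that for all sufficiently large n, W_∞(2X/3, Y) ≥ C_p · n, where W_∞ denotes the ∞-Wasserstein distance. -/

import Mathlib

open scoped BigOperators
open MeasureTheory

/-- The binomial probability mass function `Bin(m, p)`. -/
noncomputable def binPMF (m : ℕ) (p : ℝ) (k : ℕ) : ℝ :=
  (m.choose k : ℝ) * p ^ k * (1 - p) ^ (m - k)

/-- The law of `(2/3) X` on ℝ for `X ~ Bin(3n, 1/2)`. -/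
noncomputable def lawTwoThirdsBin (n : ℕ) : Measure ℝ :=
  Measure.sum fun k : ℕ =>
    ENNReal.ofReal (binPMF (3 * n) (1 / 2) k) • Measure.dirac (2 * (k : ℝ) / 3)

/-- The law of `Y ~ Bin(2n, p)` as a measure on ℝ. -/
noncomputable def lawBin (n : ℕ) (p : ℝ) : Measure ℝ :=
  Measure.sum fun k : ℕ =>
    ENNReal.ofReal (binPMF (2 * n) p k) • Measure.dirac (k : ℝ)

/-- The `∞`-Wasserstein distance: `W_∞(μ, ν)` is the infimum over all couplings `γ`
of `μ` and `ν` of the `γ`-essential supremum of `|x - y|`. -/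
noncomputable def wassersteinInf (μ ν : Measure ℝ) : ENNReal :=
  ⨅ (γ : Measure (ℝ × ℝ)) (_ : IsProbabilityMeasure γ)
    (_ : γ.map Prod.fst = μ) (_ : γ.map Prod.snd = ν),
      essSup (fun z : ℝ × ℝ => ENNReal.ofReal |z.1 - z.2|) γ

/- ### Auxiliary lemmas -/

lemma binPMF_nonneg {m : ℕ} {p : ℝ} (hp0 : 0 ≤ p) (hp1 : p ≤ 1) (k : ℕ) :
    0 ≤ binPMF m p k := by
  unfold binPMF
  have : (0:ℝ) ≤ 1 - p := by linarith
  positivity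

lemma binPMF_eq_zero {m k : ℕ} (h : m < k) (p : ℝ) : binPMF m p k = 0 := by
  unfold binPMF
  rw [Nat.choose_eq_zero_of_lt h]
  simp

lemma sum_binPMF_mul (m : ℕ) (p t : ℝ) :
    ∑ k ∈ Finset.range (m + 1), binPMF m p k * t ^ k = (1 - p + p * t) ^ m := by
  rw [show (1 - p + p * t) = p * t + (1 - p) by ring, add_pow]
  apply Finset.sum_congr rfl
  intro k _
  unfold binPMF
  rw [mul_pow]
  ring

lemma tail_bound_top (m : ℕ) (p t b : ℝ) (hp0 : 0 ≤ p) (hp1 : p ≤ 1) (ht : 1 ≤ t) :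
    ∑ k ∈ Finset.range (m + 1), (if b < (k : ℝ) then binPMF m p k else 0)
      ≤ t ^ (-b) * (1 - p + p * t) ^ m := by
  have ht0 : (0:ℝ) < t := lt_of_lt_of_le one_pos ht
  rw [← sum_binPMF_mul m p t, Finset.mul_sum]
  apply Finset.sum_le_sum
  intro k _
  have hpmf : 0 ≤ binPMF m p k := binPMF_nonneg hp0 hp1 k
  split_ifs with h
  · have h1 : (1:ℝ) ≤ t ^ ((k : ℝ) - b) := by
      calc (1:ℝ) = t ^ (0:ℝ) := (Real.rpow_zero t).symm
        _ ≤ t ^ ((k : ℝ) - b) := Real.rpow_le_rpow_of_exponent_le ht (by linarith)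
    have h2 : t ^ ((k : ℝ) - b) = t ^ (-b) * t ^ k := by
      rw [sub_eq_add_neg, add_comm, Real.rpow_add ht0, Real.rpow_natCast]
    calc binPMF m p k = binPMF m p k * 1 := by ring
      _ ≤ binPMF m p k * (t ^ (-b) * t ^ k) := by
          rw [← h2]; exact mul_le_mul_of_nonneg_left h1 hpmf
      _ = t ^ (-b) * (binPMF m p k * t ^ k) := by ring
  · have : (0:ℝ) ≤ t ^ (-b) := (Real.rpow_pos_of_pos ht0 _).le
    have : (0:ℝ) ≤ binPMF m p k * t ^ k := by positivity
    positivity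

lemma tail_bound_low (m : ℕ) (p s b : ℝ) (hp0 : 0 ≤ p) (hp1 : p ≤ 1)
    (hs0 : 0 < s) (hs1 : s ≤ 1) :
    ∑ k ∈ Finset.range (m + 1), (if (k : ℝ) < b then binPMF m p k else 0)
      ≤ s ^ (-b) * (1 - p + p * s) ^ m := by
  rw [← sum_binPMF_mul m p s, Finset.mul_sum]
  apply Finset.sum_le_sum
  intro k _
  have hpmf : 0 ≤ binPMF m p k := binPMF_nonneg hp0 hp1 k
  split_ifs with h
  · have h1 : (1:ℝ) ≤ s ^ ((k : ℝ) - b) := by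
      calc (1:ℝ) = s ^ (0:ℝ) := (Real.rpow_zero s).symm
        _ ≤ s ^ ((k : ℝ) - b) := Real.rpow_le_rpow_of_exponent_ge hs0 hs1 (by linarith)
    have h2 : s ^ ((k : ℝ) - b) = s ^ (-b) * s ^ k := by
      rw [sub_eq_add_neg, add_comm, Real.rpow_add hs0, Real.rpow_natCast]
    calc binPMF m p k = binPMF m p k * 1 := by ring
      _ ≤ binPMF m p k * (s ^ (-b) * s ^ k) := by
          rw [← h2]; exact mul_le_mul_of_nonneg_left h1 hpmf
      _ = s ^ (-b) * (binPMF m p k * s ^ k) := by ring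
  · have h3 : (0:ℝ) ≤ s ^ (-b) := (Real.rpow_pos_of_pos hs0 _).le
    have h4 : (0:ℝ) ≤ binPMF m p k * s ^ k := by positivity
    positivity

lemma tsum_ite_le (m : ℕ) (f : ℕ → ℝ) (hf : ∀ k, 0 ≤ f k) (hv : ∀ k, m < k → f k = 0)
    (c : ℕ → Prop) [DecidablePred c] (S : ℝ)
    (hS : ∑ k ∈ Finset.range (m + 1), (if c k then f k else 0) ≤ S) :
    ∑' k : ℕ, ENNReal.ofReal (if c k then f k else 0) ≤ ENNReal.ofReal S := by
  rw [tsum_eq_sum (s := Finset.range (m + 1)) ?_]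
  · rw [← ENNReal.ofReal_sum_of_nonneg (fun k _ => by
      split_ifs
      · exact hf k
      · exact le_refl 0)]
    exact ENNReal.ofReal_le_ofReal hS
  · intro k hk
    simp only [Finset.mem_range, not_lt] at hk
    rw [hv k (by omega)]
    simp

/- ### Applying the measures to sets -/

lemma lawBin_apply (n : ℕ) (p : ℝ) (A : Set ℝ) (hA : MeasurableSet A) :
    lawBin n p A = ∑' k : ℕ, ENNReal.ofReal (binPMF (2 * n) p k) * A.indicator 1 (k : ℝ) := by
  rw [lawBin, Measure.sum_apply _ hA]
  apply tsum_congr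
  intro k
  rw [Measure.smul_apply, smul_eq_mul, Measure.dirac_apply' _ hA]

lemma lawTwoThirds_apply (n : ℕ) (A : Set ℝ) (hA : MeasurableSet A) :
    lawTwoThirdsBin n A
      = ∑' k : ℕ, ENNReal.ofReal (binPMF (3 * n) (1/2) k) * A.indicator 1 (2 * (k : ℝ) / 3) := by
  rw [lawTwoThirdsBin, Measure.sum_apply _ hA]
  apply tsum_congr
  intro k
  rw [Measure.smul_apply, smul_eq_mul, Measure.dirac_apply' _ hA]

lemma lawBin_atom_top (n : ℕ) (p : ℝ) :
    lawBin n p {(2 * (n:ℝ))} = ENNReal.ofReal (p ^ (2 * n)) := by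
  rw [lawBin_apply _ _ _ (measurableSet_singleton _)]
  rw [tsum_eq_single (2 * n) ?_]
  · have hmem : ((2 * n : ℕ) : ℝ) ∈ ({(2 * (n:ℝ))} : Set ℝ) := by
      simp only [Set.mem_singleton_iff]; push_cast; ring
    rw [Set.indicator_of_mem hmem]
    simp [binPMF]
  · intro k hk
    have : ((k : ℕ) : ℝ) ∉ ({(2 * (n:ℝ))} : Set ℝ) := by
      simp only [Set.mem_singleton_iff]
      intro h
      apply hk
      have : (k : ℝ) = ((2 * n : ℕ) : ℝ) := by push_cast; linarith
      exact_mod_cast this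
    rw [Set.indicator_of_notMem this, mul_zero]

lemma lawBin_atom_zero (n : ℕ) (p : ℝ) :
    lawBin n p {(0:ℝ)} = ENNReal.ofReal ((1 - p) ^ (2 * n)) := by
  rw [lawBin_apply _ _ _ (measurableSet_singleton _)]
  rw [tsum_eq_single 0 ?_]
  · rw [Set.indicator_of_mem (by simp)]
    simp [binPMF]
  · intro k hk
    have : ((k : ℕ) : ℝ) ∉ ({(0:ℝ)} : Set ℝ) := by
      simp only [Set.mem_singleton_iff, Nat.cast_eq_zero]
      exact hk
    rw [Set.indicator_of_notMem this, mul_zero]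

lemma lawTwoThirds_atom_top (n : ℕ) :
    lawTwoThirdsBin n {(2 * (n:ℝ))} = ENNReal.ofReal ((1/2 : ℝ) ^ (3 * n)) := by
  rw [lawTwoThirds_apply _ _ (measurableSet_singleton _)]
  rw [tsum_eq_single (3 * n) ?_]
  · have hmem : 2 * ((3 * n : ℕ) : ℝ) / 3 ∈ ({(2 * (n:ℝ))} : Set ℝ) := by
      simp only [Set.mem_singleton_iff]; push_cast; ring
    rw [Set.indicator_of_mem hmem]
    simp [binPMF]
  · intro k hk
    have : 2 * ((k : ℕ) : ℝ) / 3 ∉ ({(2 * (n:ℝ))} : Set ℝ) := by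
      simp only [Set.mem_singleton_iff]
      intro h
      apply hk
      have : (k : ℝ) = ((3 * n : ℕ) : ℝ) := by push_cast; linarith
      exact_mod_cast this
    rw [Set.indicator_of_notMem this, mul_zero]

lemma lawBin_tail_top (n : ℕ) (p t b : ℝ) (hp0 : 0 ≤ p) (hp1 : p ≤ 1) (ht : 1 ≤ t) :
    lawBin n p (Set.Ioi b) ≤ ENNReal.ofReal (t ^ (-b) * (1 - p + p * t) ^ (2 * n)) := by
  rw [lawBin_apply _ _ _ measurableSet_Ioi]
  have hterm : ∀ k : ℕ,
      ENNReal.ofReal (binPMF (2 * n) p k) * (Set.Ioi b).indicator 1 ((k:ℕ) : ℝ)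
        = ENNReal.ofReal (if b < ((k:ℕ) : ℝ) then binPMF (2 * n) p k else 0) := by
    intro k
    by_cases h : b < ((k:ℕ) : ℝ)
    · rw [Set.indicator_of_mem (by simpa using h), if_pos h]
      simp
    · rw [Set.indicator_of_notMem (by simpa using h), if_neg h]
      simp
  rw [tsum_congr hterm]
  exact tsum_ite_le (2 * n) _ (binPMF_nonneg hp0 hp1) (fun k hk => binPMF_eq_zero hk p) _ _
    (tail_bound_top (2 * n) p t b hp0 hp1 ht)

lemma lawTwoThirds_tail_top (n : ℕ) (t b : ℝ) (ht : 1 ≤ t) :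
    lawTwoThirdsBin n (Set.Ioi b)
      ≤ ENNReal.ofReal (t ^ (-(3/2 * b)) * ((1 + t)/2) ^ (3 * n)) := by
  rw [lawTwoThirds_apply _ _ measurableSet_Ioi]
  have hterm : ∀ k : ℕ,
      ENNReal.ofReal (binPMF (3 * n) (1/2) k) * (Set.Ioi b).indicator 1 (2 * ((k:ℕ) : ℝ) / 3)
        = ENNReal.ofReal (if 3/2 * b < ((k:ℕ) : ℝ) then binPMF (3 * n) (1/2) k else 0) := by
    intro k
    by_cases h : 3/2 * b < ((k:ℕ) : ℝ)
    · rw [Set.indicator_of_mem (by simp only [Set.mem_Ioi]; linarith), if_pos h]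
      simp
    · rw [Set.indicator_of_notMem (by simp only [Set.mem_Ioi]; push_neg at h ⊢; linarith),
        if_neg h]
      simp
  rw [tsum_congr hterm]
  have := tail_bound_top (3 * n) (1/2) t (3/2 * b) (by norm_num) (by norm_num) ht
  rw [show (1 - 1/2 + 1/2 * t : ℝ) = (1 + t)/2 by ring] at this
  exact tsum_ite_le (3 * n) _ (binPMF_nonneg (by norm_num) (by norm_num))
    (fun k hk => binPMF_eq_zero hk _) _ _ this

lemma lawTwoThirds_tail_low (n : ℕ) (s b : ℝ) (hs0 : 0 < s) (hs1 : s ≤ 1) :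
    lawTwoThirdsBin n (Set.Iio b)
      ≤ ENNReal.ofReal (s ^ (-(3/2 * b)) * ((1 + s)/2) ^ (3 * n)) := by
  rw [lawTwoThirds_apply _ _ measurableSet_Iio]
  have hterm : ∀ k : ℕ,
      ENNReal.ofReal (binPMF (3 * n) (1/2) k) * (Set.Iio b).indicator 1 (2 * ((k:ℕ) : ℝ) / 3)
        = ENNReal.ofReal (if ((k:ℕ) : ℝ) < 3/2 * b then binPMF (3 * n) (1/2) k else 0) := by
    intro k
    by_cases h : ((k:ℕ) : ℝ) < 3/2 * b
    · rw [Set.indicator_of_mem (by simp only [Set.mem_Iio]; linarith), if_pos h]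
      simp
    · rw [Set.indicator_of_notMem (by simp only [Set.mem_Iio]; push_neg at h ⊢; linarith),
        if_neg h]
      simp
  rw [tsum_congr hterm]
  have := tail_bound_low (3 * n) (1/2) s (3/2 * b) (by norm_num) (by norm_num) hs0 hs1
  rw [show (1 - 1/2 + 1/2 * s : ℝ) = (1 + s)/2 by ring] at this
  exact tsum_ite_le (3 * n) _ (binPMF_nonneg (by norm_num) (by norm_num))
    (fun k hk => binPMF_eq_zero hk _) _ _ this

/- ### Lower bounds on the Wasserstein distance -/

lemma wInf_ge (μ ν : Measure ℝ) (r : ℝ) (A B : Set ℝ) (hA : MeasurableSet A)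
    (hB : MeasurableSet B) (hrel : ∀ x y : ℝ, x ∈ A → |x - y| < r → y ∈ B)
    (hlt : ν B < μ A) :
    ENNReal.ofReal r ≤ wassersteinInf μ ν := by
  rw [wassersteinInf]
  refine le_iInf fun γ => le_iInf fun _ => le_iInf fun h1 => le_iInf fun h2 => ?_
  by_contra hcon
  push_neg at hcon
  have hae := ENNReal.ae_le_essSup (μ := γ) (fun z : ℝ × ℝ => ENNReal.ofReal |z.1 - z.2|)
  have hsub : (Prod.fst ⁻¹' A : Set (ℝ × ℝ)) ≤ᵐ[γ] (Prod.snd ⁻¹' B : Set (ℝ × ℝ)) := by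
    filter_upwards [hae] with z hz hzA
    have hlt' : ENNReal.ofReal |z.1 - z.2| < ENNReal.ofReal r := lt_of_le_of_lt hz hcon
    exact hrel z.1 z.2 hzA ((ENNReal.ofReal_lt_ofReal_iff_of_nonneg (abs_nonneg _)).mp hlt')
  have hle : μ A ≤ ν B := by
    rw [← h1, ← h2, Measure.map_apply measurable_fst hA, Measure.map_apply measurable_snd hB]
    exact measure_mono_ae hsub
  exact absurd hle (not_le.mpr hlt)

lemma wInf_ge' (μ ν : Measure ℝ) (r : ℝ) (A B : Set ℝ) (hA : MeasurableSet A)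
    (hB : MeasurableSet B) (hrel : ∀ x y : ℝ, y ∈ A → |x - y| < r → x ∈ B)
    (hlt : μ B < ν A) :
    ENNReal.ofReal r ≤ wassersteinInf μ ν := by
  rw [wassersteinInf]
  refine le_iInf fun γ => le_iInf fun _ => le_iInf fun h1 => le_iInf fun h2 => ?_
  by_contra hcon
  push_neg at hcon
  have hae := ENNReal.ae_le_essSup (μ := γ) (fun z : ℝ × ℝ => ENNReal.ofReal |z.1 - z.2|)
  have hsub : (Prod.snd ⁻¹' A : Set (ℝ × ℝ)) ≤ᵐ[γ] (Prod.fst ⁻¹' B : Set (ℝ × ℝ)) := by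
    filter_upwards [hae] with z hz hzA
    have hlt' : ENNReal.ofReal |z.1 - z.2| < ENNReal.ofReal r := lt_of_le_of_lt hz hcon
    exact hrel z.1 z.2 hzA ((ENNReal.ofReal_lt_ofReal_iff_of_nonneg (abs_nonneg _)).mp hlt')
  have hle : ν A ≤ μ B := by
    rw [← h1, ← h2, Measure.map_apply measurable_snd hA, Measure.map_apply measurable_fst hB]
    exact measure_mono_ae hsub
  exact absurd hle (not_le.mpr hlt)

lemma rpow_lt_of_log (t X e : ℝ) (ht : 0 < t) (hX : 1 < X)
    (he : Real.log t * e = Real.log X / 2) : t ^ e < X := by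
  rw [Real.rpow_def_of_pos ht, he]
  have hl : 0 < Real.log X := Real.log_pos hX
  calc Real.exp (Real.log X / 2) < Real.exp (Real.log X) :=
        Real.exp_lt_exp.mpr (by linarith)
    _ = X := Real.exp_log (by linarith)

/-- Binomial approximation of `2X/3` is linearly bad: for `X ~ Bin(3n, 1/2)` and
`Y ~ Bin(2n, p)` with `p ∈ [0, 1]`, there is `C_p > 0` such that for all large `n`,
`W_∞(2X/3, Y) ≥ C_p · n`. -/
theorem binomial_approx_linearly_bad (p : ℝ) (hp : 0 ≤ p ∧ p ≤ 1) :
    ∃ C : ℝ, 0 < C ∧ ∃ N : ℕ, ∀ n : ℕ, N ≤ n →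
      ENNReal.ofReal (C * n) ≤ wassersteinInf (lawTwoThirdsBin n) (lawBin n p) := by
  obtain ⟨hp0, hp1⟩ := hp
  by_cases hcaseA : 8 * p ^ 2 < 1
  · -- Case A : the top atom of `lawTwoThirdsBin` is much heavier than the top tail of `lawBin`
    have hε : (0:ℝ) < 1 - 8 * p ^ 2 := by linarith
    set t : ℝ := 32 / (1 - 8 * p ^ 2) with ht_def
    have ht32 : (32:ℝ) ≤ t := by
      rw [ht_def, le_div_iff₀ hε]; nlinarith [sq_nonneg p]
    have ht1 : (1:ℝ) < t := by linarith
    have ht0 : (0:ℝ) < t := by linarith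
    have hkey : (1 - 8 * p ^ 2) * t = 32 := by
      rw [ht_def]; field_simp
    have hplt : p < 1 := by nlinarith [sq_nonneg p]
    have hWpos : (0:ℝ) < 1 - p + p * t := by nlinarith [mul_nonneg hp0 ht0.le]
    have hW : 8 * (1 - p + p * t) ^ 2 < t ^ 2 := by
      have h2 : (1 - 8 * p ^ 2) * t ^ 2 = 32 * t := by
        rw [show t ^ 2 = t * t by ring, ← mul_assoc, hkey]
      nlinarith [mul_nonneg (sq_nonneg (2 * p - 1)) ht0.le, sq_nonneg (1 - p), ht1, ht0,
        mul_nonneg (mul_nonneg hp0 (by linarith : (0:ℝ) ≤ 1 - p)) ht0.le]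
    set X : ℝ := t ^ 2 / (8 * (1 - p + p * t) ^ 2) with hX_def
    have hX1 : 1 < X := by
      rw [hX_def, lt_div_iff₀ (by positivity)]; linarith
    set c : ℝ := Real.log X / (2 * Real.log t) with hc_def
    have hlogt : 0 < Real.log t := Real.log_pos ht1
    have hc : 0 < c := div_pos (Real.log_pos hX1) (by linarith)
    have htc : t ^ c < X := by
      apply rpow_lt_of_log t X c ht0 hX1
      rw [hc_def]; field_simp
    have hq : t ^ c * (1 - p + p * t) ^ 2 / t ^ 2 < 1 / 8 := by
      rw [div_lt_iff₀ (by positivity)]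
      calc t ^ c * (1 - p + p * t) ^ 2 < X * (1 - p + p * t) ^ 2 :=
            mul_lt_mul_of_pos_right htc (by positivity)
        _ = 1 / 8 * t ^ 2 := by rw [hX_def, div_mul_eq_mul_div, div_eq_iff (by positivity)]; ring
    refine ⟨c, hc, 1, fun n hn => ?_⟩
    have hn0 : n ≠ 0 := by omega
    apply wInf_ge _ _ _ {(2 * (n:ℝ))} (Set.Ioi (2 * (n:ℝ) - c * n))
      (measurableSet_singleton _) measurableSet_Ioi
    · intro x y hx hxy
      simp only [Set.mem_singleton_iff] at hx
      obtain ⟨h1', h2'⟩ := abs_lt.mp hxy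
      simp only [Set.mem_Ioi]
      linarith
    · rw [lawTwoThirds_atom_top]
      calc lawBin n p (Set.Ioi (2 * (n:ℝ) - c * n))
          ≤ ENNReal.ofReal (t ^ (-(2 * (n:ℝ) - c * n)) * (1 - p + p * t) ^ (2 * n)) :=
            lawBin_tail_top n p t _ hp0 hp1 ht1.le
        _ = ENNReal.ofReal ((t ^ c * (1 - p + p * t) ^ 2 / t ^ 2) ^ n) := by
            congr 1
            have e1 : t ^ (-(2 * (n:ℝ) - c * (n:ℝ))) = (t ^ (c - 2 : ℝ)) ^ n := by
              rw [← Real.rpow_natCast (t ^ (c - 2 : ℝ)) n, ← Real.rpow_mul ht0.le]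
              congr 1; ring
            have e3 : t ^ (c - 2 : ℝ) = t ^ c / t ^ 2 := by
              rw [Real.rpow_sub ht0]
              congr 1
              rw [show (2:ℝ) = ((2:ℕ):ℝ) by norm_num, Real.rpow_natCast]
            rw [e1, e3, pow_mul, ← mul_pow]
            congr 1; ring
        _ < ENNReal.ofReal ((1 / 2 : ℝ) ^ (3 * n)) := by
            rw [ENNReal.ofReal_lt_ofReal_iff (by positivity)]
            calc (t ^ c * (1 - p + p * t) ^ 2 / t ^ 2) ^ n < (1 / 8 : ℝ) ^ n := by
                  apply pow_lt_pow_left₀ hq (by positivity) hn0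
              _ = (1 / 2 : ℝ) ^ (3 * n) := by rw [pow_mul]; norm_num
  · by_cases hcaseC : 1 < 8 * (1 - p) ^ 2
    · -- Case C : the bottom atom of `lawBin` is much heavier than the bottom tail
      have hu : 0 < 1 - p := by nlinarith [sq_nonneg (1 - p)]
      have hε : (0:ℝ) < 8 * (1 - p) ^ 2 - 1 := by linarith
      obtain ⟨s, hs_def⟩ : ∃ s : ℝ, s = (8 * (1 - p) ^ 2 - 1) / 14 := ⟨_, rfl⟩
      have hs0 : 0 < s := by rw [hs_def]; positivity
      have hε7 : 8 * (1 - p) ^ 2 - 1 ≤ 7 := by nlinarith [sq_nonneg (1 - p)]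
      have hshalf : s ≤ 1 / 2 := by rw [hs_def]; linarith
      have hs1 : s < 1 := by linarith
      have hkey : 14 * s = 8 * (1 - p) ^ 2 - 1 := by rw [hs_def]; ring
      have hV : ((1 + s) / 2) ^ 3 < (1 - p) ^ 2 := by
        nlinarith [hs0, hshalf, mul_nonneg hs0.le hs0.le,
          mul_nonneg (mul_nonneg hs0.le hs0.le) hs0.le, hkey]
      obtain ⟨X, hX_def⟩ : ∃ X : ℝ, X = (1 - p) ^ 2 / ((1 + s) / 2) ^ 3 := ⟨_, rfl⟩
      have hX1 : 1 < X := by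
        rw [hX_def, lt_div_iff₀ (by positivity)]; linarith
      have hlogs : Real.log s < 0 := Real.log_neg hs0 hs1
      obtain ⟨c, hc_def⟩ : ∃ c : ℝ, c = Real.log X / (3 * (-Real.log s)) := ⟨_, rfl⟩
      have hc : 0 < c := hc_def ▸ div_pos (Real.log_pos hX1) (by linarith)
      have hls0 : Real.log s ≠ 0 := ne_of_lt hlogs
      have htc : s ^ (-(3 / 2) * c) < X := by
        apply rpow_lt_of_log s X _ hs0 hX1
        rw [hc_def]; field_simp
      have hq : s ^ (-(3 / 2) * c) * ((1 + s) / 2) ^ 3 < (1 - p) ^ 2 := by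
        calc s ^ (-(3 / 2) * c) * ((1 + s) / 2) ^ 3 < X * ((1 + s) / 2) ^ 3 :=
              mul_lt_mul_of_pos_right htc (by positivity)
          _ = (1 - p) ^ 2 := by rw [hX_def]; field_simp
      refine ⟨c, hc, 1, fun n hn => ?_⟩
      have hn0 : n ≠ 0 := by omega
      apply wInf_ge' _ _ _ {(0:ℝ)} (Set.Iio (c * n))
        (measurableSet_singleton _) measurableSet_Iio
      · intro x y hy hxy
        simp only [Set.mem_singleton_iff] at hy
        obtain ⟨h1', h2'⟩ := abs_lt.mp hxy
        simp only [Set.mem_Iio]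
        linarith
      · rw [lawBin_atom_zero]
        calc lawTwoThirdsBin n (Set.Iio (c * n))
            ≤ ENNReal.ofReal (s ^ (-(3 / 2 * (c * n))) * ((1 + s) / 2) ^ (3 * n)) :=
              lawTwoThirds_tail_low n s _ hs0 hs1.le
          _ = ENNReal.ofReal ((s ^ (-(3 / 2) * c) * ((1 + s) / 2) ^ 3) ^ n) := by
              congr 1
              have e1 : s ^ (-(3 / 2 * (c * (n:ℝ)))) = (s ^ (-(3 / 2) * c)) ^ n := by
                rw [← Real.rpow_natCast (s ^ (-(3 / 2) * c)) n, ← Real.rpow_mul hs0.le]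
                congr 1; ring
              rw [e1, pow_mul, ← mul_pow]
          _ < ENNReal.ofReal ((1 - p) ^ (2 * n)) := by
              rw [ENNReal.ofReal_lt_ofReal_iff (by positivity)]
              calc (s ^ (-(3 / 2) * c) * ((1 + s) / 2) ^ 3) ^ n < ((1 - p) ^ 2) ^ n := by
                    apply pow_lt_pow_left₀ hq ?_ hn0
                    positivity
                _ = (1 - p) ^ (2 * n) := by rw [← pow_mul]
    · -- Case B : the top atom of `lawBin` is much heavier than the top tail
      have hBB : 1 < 8 * p ^ 2 := by
        push_neg at hcaseA hcaseC
        nlinarith [sq_nonneg (4 * (1 - p) - 1)]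
      have hppos : 0 < p := by nlinarith [sq_nonneg p]
      have hε : (0:ℝ) < 8 * p ^ 2 - 1 := by linarith
      obtain ⟨t, ht_def⟩ : ∃ t : ℝ, t = 14 / (8 * p ^ 2 - 1) := ⟨_, rfl⟩
      have hε7 : 8 * p ^ 2 - 1 ≤ 7 := by nlinarith
      have ht2 : (2:ℝ) ≤ t := by rw [ht_def, le_div_iff₀ hε]; linarith
      have ht1 : (1:ℝ) < t := by linarith
      have ht0 : (0:ℝ) < t := by linarith
      have hkey : (8 * p ^ 2 - 1) * t = 14 := by rw [ht_def]; field_simp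
      have h2 : (8 * p ^ 2 - 1) * t ^ 3 = 14 * t ^ 2 := by
        rw [show t ^ 3 = t * t ^ 2 by ring, ← mul_assoc, hkey]
      have hV : ((1 + t) / 2) ^ 3 < p ^ 2 * t ^ 3 := by
        nlinarith [h2, ht2, ht0, mul_nonneg (by linarith : (0:ℝ) ≤ t - 2) ht0.le]
      obtain ⟨X, hX_def⟩ : ∃ X : ℝ, X = p ^ 2 * t ^ 3 / ((1 + t) / 2) ^ 3 := ⟨_, rfl⟩
      have hX1 : 1 < X := by
        rw [hX_def, lt_div_iff₀ (by positivity)]; linarith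
      obtain ⟨c, hc_def⟩ : ∃ c : ℝ, c = Real.log X / (3 * Real.log t) := ⟨_, rfl⟩
      have hlogt : 0 < Real.log t := Real.log_pos ht1
      have hc : 0 < c := hc_def ▸ div_pos (Real.log_pos hX1) (by linarith)
      have hlt0 : Real.log t ≠ 0 := ne_of_gt hlogt
      have htc : t ^ (3 / 2 * c) < X := by
        apply rpow_lt_of_log t X _ ht0 hX1
        rw [hc_def]; field_simp
      have hq : t ^ (3 / 2 * c) * ((1 + t) / 2) ^ 3 / t ^ 3 < p ^ 2 := by
        rw [div_lt_iff₀ (by positivity)]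
        calc t ^ (3 / 2 * c) * ((1 + t) / 2) ^ 3 < X * ((1 + t) / 2) ^ 3 :=
              mul_lt_mul_of_pos_right htc (by positivity)
          _ = p ^ 2 * t ^ 3 := by rw [hX_def]; field_simp
      refine ⟨c, hc, 1, fun n hn => ?_⟩
      have hn0 : n ≠ 0 := by omega
      apply wInf_ge' _ _ _ {(2 * (n:ℝ))} (Set.Ioi (2 * (n:ℝ) - c * n))
        (measurableSet_singleton _) measurableSet_Ioi
      · intro x y hy hxy
        simp only [Set.mem_singleton_iff] at hy
        obtain ⟨h1', h2'⟩ := abs_lt.mp hxy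
        simp only [Set.mem_Ioi]
        linarith
      · rw [lawBin_atom_top]
        calc lawTwoThirdsBin n (Set.Ioi (2 * (n:ℝ) - c * n))
            ≤ ENNReal.ofReal (t ^ (-(3 / 2 * (2 * (n:ℝ) - c * n))) * ((1 + t) / 2) ^ (3 * n)) :=
              lawTwoThirds_tail_top n t _ ht1.le
          _ = ENNReal.ofReal ((t ^ (3 / 2 * c) * ((1 + t) / 2) ^ 3 / t ^ 3) ^ n) := by
              congr 1
              have e1 : t ^ (-(3 / 2 * (2 * (n:ℝ) - c * (n:ℝ)))) = (t ^ (3 / 2 * c - 3 : ℝ)) ^ n := by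
                rw [← Real.rpow_natCast (t ^ (3 / 2 * c - 3 : ℝ)) n, ← Real.rpow_mul ht0.le]
                congr 1; ring
              have e3 : t ^ (3 / 2 * c - 3 : ℝ) = t ^ (3 / 2 * c) / t ^ 3 := by
                rw [Real.rpow_sub ht0]
                congr 1
                rw [show (3:ℝ) = ((3:ℕ):ℝ) by norm_num, Real.rpow_natCast]
              rw [e1, e3, pow_mul, ← mul_pow]
              congr 1; ring
          _ < ENNReal.ofReal (p ^ (2 * n)) := by
              rw [ENNReal.ofReal_lt_ofReal_iff (by positivity)]
              calc (t ^ (3 / 2 * c) * ((1 + t) / 2) ^ 3 / t ^ 3) ^ n < (p ^ 2) ^ n := by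
                    apply pow_lt_pow_left₀ hq ?_ hn0
                    positivity
                _ = p ^ (2 * n) := by rw [← pow_mul]
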